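/- Let m ≥ 1, let S ⊆ 𝔽₂^m be a subspace and Δ ∈ 𝔽₂^m ∖ S; let S_Δ be the subspace spanned by S and Δ, let Ŝ := (S_Δ)⊥, and let Δ̂ be any vector in S⊥ ∖ Ŝ. Then for all x, z ∈ 𝔽₂^m and all α, β ∈ ℂ: H^{⊗m} X^x Z^z (α|S⟩ + β|S+Δ⟩) = Z^x X^z ( ((α+β)/√2)|Ŝ⟩ + ((α−β)/√2)|Ŝ+Δ̂⟩ ). -/

import Mathlib

/-!
Hadamard-basis measurement identity for the authenticated qubit of "Quantum State
Obfuscation from Classical Oracles":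
`H^{⊗m} X^x Z^z (α|S⟩ + β|S+Δ⟩) = Z^x X^z (((α+β)/√2)|Ŝ⟩ + ((α−β)/√2)|Ŝ+Δ̂⟩)`.
-/

open scoped BigOperators

noncomputable section

attribute [local instance] Classical.propDecidable

abbrev Fvec (n : ℕ) : Type := Fin n → ZMod 2

abbrev QSpace (n : ℕ) : Type := EuclideanSpace ℂ (Fvec n)

/-- The ±1 lift of a bit: `+1` if `b = 0` and `−1` if `b = 1`. -/
def sgn (b : ZMod 2) : ℂ := if b = 0 then 1 else -1

/-- The dot product over `𝔽₂`. -/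
def dotp {n : ℕ} (x y : Fvec n) : ZMod 2 := ∑ i, x i * y i

/-- The orthogonal complement `T⊥ = {w : w·t = 0 for all t ∈ T}` with respect to the
`𝔽₂` dot product. -/
def dualSub {n : ℕ} (T : Submodule (ZMod 2) (Fvec n)) : Submodule (ZMod 2) (Fvec n) where
  carrier := {w | ∀ t ∈ T, dotp w t = 0}
  add_mem' := by
    intro a b ha hb t ht
    have h : dotp (a + b) t = dotp a t + dotp b t := by
      simp [dotp, add_mul, Finset.sum_add_distrib]
    rw [h, ha t ht, hb t ht, add_zero]
  zero_mem' := by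
    intro t ht
    simp [dotp]
  smul_mem' := by
    intro c a ha t ht
    have h : dotp (c • a) t = c * dotp a t := by
      simp [dotp, Finset.mul_sum, mul_assoc]
    rw [h, ha t ht, mul_zero]

/-- The normalized coset state `|T+a⟩ = |T|^{−1/2} ∑_{t ∈ T} |t+a⟩`
(note that `v = t + a` iff `v + a ∈ T`, as we are in characteristic two). -/
def cosetState {n : ℕ} (T : Submodule (ZMod 2) (Fvec n)) (a : Fvec n) : QSpace n :=
  WithLp.toLp 2 (fun v => if v + a ∈ T then ((Real.sqrt (Nat.card ↥T) : ℂ))⁻¹ else 0)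

/-- The subspace `S_Δ` spanned by `S` and `Δ`, i.e. `S ∪ (S + Δ)` when `Δ ∉ S`. -/
def extSpan {n : ℕ} (S : Submodule (ZMod 2) (Fvec n)) (Δ : Fvec n) :
    Submodule (ZMod 2) (Fvec n) :=
  S ⊔ Submodule.span (ZMod 2) {Δ}

/-- The `m`-qubit Hadamard `H^{⊗m}`, with matrix entries
`⟨u|H^{⊗m}|v⟩ = 2^{−m/2} (−1)^{u·v}`. -/
def Had {n : ℕ} (ψ : QSpace n) : QSpace n :=
  WithLp.toLp 2 (fun u => (Real.sqrt (2 ^ n) : ℂ)⁻¹ * ∑ v, sgn (dotp u v) * ψ v)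

/-- The Pauli operator `X^x`, acting by `X^x |v⟩ = |v + x⟩`. -/
def PauliX {n : ℕ} (x : Fvec n) : QSpace n →ₗ[ℂ] QSpace n where
  toFun ψ := WithLp.toLp 2 (fun v => ψ (v + x))
  map_add' := fun _ _ => rfl
  map_smul' := fun _ _ => rfl

/-- The Pauli operator `Z^z`, acting by `Z^z |v⟩ = (−1)^{z·v} |v⟩`. -/
def PauliZ {n : ℕ} (z : Fvec n) : QSpace n →ₗ[ℂ] QSpace n where
  toFun ψ := WithLp.toLp 2 (fun v => sgn (dotp z v) * ψ v)
  map_add' := fun f g => by ext v; simp [mul_add]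
  map_smul' := fun c f => by ext v; simp <;> ring

section helpers
variable {n : ℕ}

lemma zmod2_cases (a : ZMod 2) : a = 0 ∨ a = 1 := by revert a; decide

lemma zmod2_add_self (a : ZMod 2) : a + a = 0 := by revert a; decide

lemma fvec_add_self (w : Fvec n) : w + w = 0 :=
  funext fun i => zmod2_add_self (w i)

lemma mem_dualSub {T : Submodule (ZMod 2) (Fvec n)} {w : Fvec n} :
    w ∈ dualSub T ↔ ∀ t ∈ T, dotp w t = 0 := Iff.rfl

lemma sgn_zero : sgn 0 = 1 := rfl

lemma sgn_add (a b : ZMod 2) : sgn (a + b) = sgn a * sgn b := by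
  rcases zmod2_cases a with ha | ha <;> rcases zmod2_cases b with hb | hb <;>
    subst ha <;> subst hb <;>
    simp [sgn, show (1:ZMod 2)+1 = 0 from by decide, show (1:ZMod 2) ≠ 0 from by decide]

lemma dotp_comm (x y : Fvec n) : dotp x y = dotp y x := by
  simp [dotp, mul_comm]

lemma dotp_add_left (x y w : Fvec n) : dotp (x + y) w = dotp x w + dotp y w := by
  simp [dotp, add_mul, Finset.sum_add_distrib]

lemma dotp_add_right (w x y : Fvec n) : dotp w (x + y) = dotp w x + dotp w y := by
  simp [dotp, mul_add, Finset.sum_add_distrib]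

lemma dotp_smul_right (w : Fvec n) (c : ZMod 2) (y : Fvec n) :
    dotp w (c • y) = c * dotp w y := by
  simp [dotp, Finset.mul_sum]; ring_nf
  exact Finset.sum_congr rfl fun i _ => by ring

lemma dotp_zero_right (w : Fvec n) : dotp w 0 = 0 := by simp [dotp]

lemma dotp_single (v : Fvec n) (i : Fin n) : dotp v (Pi.single i 1) = v i := by
  simp [dotp, Pi.single_apply, Finset.sum_ite_eq']

end helpers
lemma keySum {n : ℕ} (T : Submodule (ZMod 2) (Fvec n)) (y : Fvec n) :
    ∑ v : Fvec n, (if v ∈ T then sgn (dotp y v) else 0)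
      = if y ∈ dualSub T then (Nat.card T : ℂ) else 0 := by
  by_cases h : y ∈ dualSub T
  · rw [if_pos h]
    have h1 : ∀ v : Fvec n, (if v ∈ T then sgn (dotp y v) else 0)
        = (if v ∈ T then (1:ℂ) else 0) := by
      intro v; by_cases hv : v ∈ T
      · rw [if_pos hv, if_pos hv, h v hv, sgn_zero]
      · simp [hv]
    rw [Finset.sum_congr rfl (fun v _ => h1 v), Finset.sum_ite, Finset.sum_const,
      Finset.sum_const]
    simp [Nat.card_eq_fintype_card, Fintype.card_subtype]
  · rw [if_neg h]
    rw [mem_dualSub] at h; push_neg at h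
    obtain ⟨t₀, ht₀, hd⟩ := h
    have hs : sgn (dotp y t₀) = -1 := by
      rcases zmod2_cases (dotp y t₀) with h0 | h1
      · exact absurd h0 hd
      · simp [sgn, h1, show (1:ZMod 2) ≠ 0 from by decide]
    set f : Fvec n → ℂ := fun v => if v ∈ T then sgn (dotp y v) else 0 with hf
    have hneg : ∀ v, f (v + t₀) = - f v := by
      intro v
      have hmem : v + t₀ ∈ T ↔ v ∈ T := by
        constructor
        · intro hh
          have := T.add_mem hh ht₀
          rwa [add_assoc, fvec_add_self, add_zero] at this
        · intro hh; exact T.add_mem hh ht₀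
      by_cases hv : v ∈ T
      · rw [hf]; simp only [if_pos (hmem.mpr hv), if_pos hv]
        rw [dotp_add_right, sgn_add, hs]; ring
      · rw [hf]; simp only [if_neg (fun hh => hv (hmem.mp hh)), if_neg hv, neg_zero]
    have hsum : ∑ v, f v = - ∑ v, f v := by
      calc ∑ v, f v = ∑ v, f (v + t₀) := (Equiv.sum_comp (Equiv.addRight t₀) f).symm
      _ = ∑ v, - f v := Finset.sum_congr rfl fun v _ => hneg v
      _ = - ∑ v, f v := by rw [Finset.sum_neg_distrib]
    have := add_self_eq_zero.mp (by linear_combination hsum)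
    simpa [hf] using this
lemma dotp_forall_zero {n : ℕ} {v : Fvec n} (h : ∀ w : Fvec n, dotp v w = 0) : v = 0 := by
  funext i
  have := h (Pi.single i 1)
  rwa [dotp_single] at this

lemma card_top {n : ℕ} : (Nat.card (⊤ : Submodule (ZMod 2) (Fvec n)) : ℕ) = 2 ^ n := by
  rw [Nat.card_congr (Submodule.topEquiv (R := ZMod 2) (M := Fvec n)).toEquiv]
  simp [Nat.card_eq_fintype_card, ZMod.card]

lemma sum_sgn_all {n : ℕ} (v : Fvec n) :
    ∑ y : Fvec n, sgn (dotp y v) = if v = 0 then ((2:ℂ) ^ n) else 0 := by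
  have hrw : ∀ y : Fvec n, sgn (dotp y v) = sgn (dotp v y) := fun y => by rw [dotp_comm]
  have hmem : ∀ y : Fvec n, ((y ∈ (⊤ : Submodule (ZMod 2) (Fvec n))) = True) := by
    intro y; simp
  calc ∑ y : Fvec n, sgn (dotp y v)
      = ∑ y : Fvec n, (if y ∈ (⊤ : Submodule (ZMod 2) (Fvec n)) then sgn (dotp v y) else 0) := by
        refine Finset.sum_congr rfl (fun y _ => ?_)
        rw [if_pos Submodule.mem_top, hrw]
    _ = if v ∈ dualSub (⊤ : Submodule (ZMod 2) (Fvec n))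
          then (Nat.card (⊤ : Submodule (ZMod 2) (Fvec n)) : ℂ) else 0 := keySum _ v
    _ = if v = 0 then ((2:ℂ) ^ n) else 0 := by
        by_cases hv : v = 0
        · rw [if_pos, if_pos hv]
          · rw [card_top]; push_cast; ring
          · intro t _; rw [hv]; rw [dotp_comm]; exact dotp_zero_right t
        · rw [if_neg, if_neg hv]
          intro hmem2
          exact hv (dotp_forall_zero (fun w => hmem2 w Submodule.mem_top))

lemma card_dual_mul {n : ℕ} (T : Submodule (ZMod 2) (Fvec n)) :
    Nat.card (dualSub T) * Nat.card T = 2 ^ n := by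
  have key : ((Nat.card (dualSub T) * Nat.card T : ℕ) : ℂ) = ((2 ^ n : ℕ) : ℂ) := by
    have lhs : ∑ y : Fvec n, ∑ v : Fvec n, (if v ∈ T then sgn (dotp y v) else 0)
        = (Nat.card (dualSub T) : ℂ) * Nat.card T := by
      rw [Finset.sum_congr rfl (fun y _ => keySum T y)]
      rw [Finset.sum_ite, Finset.sum_const, Finset.sum_const]
      simp [Nat.card_eq_fintype_card, Fintype.card_subtype]
    have rhs : ∑ y : Fvec n, ∑ v : Fvec n, (if v ∈ T then sgn (dotp y v) else 0)
        = (2:ℂ) ^ n := by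
      rw [Finset.sum_comm]
      have h1 : ∀ v : Fvec n, ∑ y : Fvec n, (if v ∈ T then sgn (dotp y v) else 0)
          = if v ∈ T then (if v = 0 then ((2:ℂ) ^ n) else 0) else 0 := by
        intro v
        by_cases hv : v ∈ T
        · simp only [if_pos hv]; exact sum_sgn_all v
        · simp [hv]
      rw [Finset.sum_congr rfl (fun v _ => h1 v)]
      rw [Fintype.sum_eq_single 0 (fun v hv => by simp [hv])]
      simp [T.zero_mem]
    push_cast
    rw [← lhs, rhs]
  exact_mod_cast key
lemma mem_extSpan {n : ℕ} {S : Submodule (ZMod 2) (Fvec n)} {Δ t : Fvec n} :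
    t ∈ extSpan S Δ ↔ ∃ s ∈ S, ∃ c : ZMod 2, t = s + c • Δ := by
  constructor
  · intro h
    obtain ⟨a, ha, b, hb, hab⟩ := Submodule.mem_sup.mp h
    obtain ⟨c, hc⟩ := Submodule.mem_span_singleton.mp hb
    exact ⟨a, ha, c, by rw [← hab, ← hc]⟩
  · rintro ⟨s, hs, c, rfl⟩
    exact Submodule.add_mem _ (Submodule.mem_sup_left hs)
      (Submodule.mem_sup_right (Submodule.smul_mem _ c (Submodule.mem_span_singleton_self Δ)))

lemma card_extSpan {n : ℕ} (S : Submodule (ZMod 2) (Fvec n)) (Δ : Fvec n) (hΔ : Δ ∉ S) :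
    Nat.card (extSpan S Δ) = 2 * Nat.card S := by
  have hbij : Function.Bijective
      (fun p : (ZMod 2) × S => (⟨(p.2 : Fvec n) + p.1 • Δ,
        mem_extSpan.mpr ⟨p.2, p.2.2, p.1, rfl⟩⟩ : extSpan S Δ)) := by
    constructor
    · rintro ⟨c, s, hs⟩ ⟨c', s', hs'⟩ h
      simp only [Subtype.mk.injEq] at h
      rcases zmod2_cases c with rfl | rfl <;> rcases zmod2_cases c' with rfl | rfl <;>
        simp only [zero_smul, one_smul, add_zero] at h
      · simp only [Prod.mk.injEq]; exact ⟨trivial, Subtype.ext h⟩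
      · have hΔeq : Δ = s + s' := by
          rw [h, show s' + Δ + s' = Δ + (s' + s') from by abel, fvec_add_self, add_zero]
        exact absurd (hΔeq ▸ S.add_mem hs hs') hΔ
      · have hΔeq : Δ = s + s' := by
          rw [← h, show s + (s + Δ) = Δ + (s + s) from by abel, fvec_add_self, add_zero]
        exact absurd (hΔeq ▸ S.add_mem hs hs') hΔ
      · have : s = s' := by
          have := congrArg (· + Δ) h
          simpa [add_assoc, fvec_add_self] using this
        simp only [Prod.mk.injEq]; exact ⟨trivial, Subtype.ext this⟩
    · rintro ⟨t, ht⟩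
      obtain ⟨s, hs, c, rfl⟩ := mem_extSpan.mp ht
      exact ⟨(c, ⟨s, hs⟩), rfl⟩
  have := Nat.card_congr (Equiv.ofBijective _ hbij)
  rw [← this, Nat.card_prod, Nat.card_eq_fintype_card (α := ZMod 2), ZMod.card]

lemma mem_dual_ext {n : ℕ} {S : Submodule (ZMod 2) (Fvec n)} {Δ y : Fvec n} :
    y ∈ dualSub (extSpan S Δ) ↔ y ∈ dualSub S ∧ dotp y Δ = 0 := by
  constructor
  · intro h
    refine ⟨fun t ht => h t (Submodule.mem_sup_left ht), ?_⟩
    exact h Δ (Submodule.mem_sup_right (Submodule.mem_span_singleton_self Δ))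
  · rintro ⟨h1, h2⟩ t ht
    obtain ⟨s, hs, c, rfl⟩ := mem_extSpan.mp ht
    rw [dotp_add_right, dotp_smul_right, h1 s hs, h2, mul_zero, add_zero]
lemma main_sum {n : ℕ} (T : Submodule (ZMod 2) (Fvec n)) (a x z u : Fvec n) :
    ∑ v : Fvec n, sgn (dotp u v) * (sgn (dotp z (v + x)) * cosetState T a (v + x))
      = sgn (dotp u x) * (sgn (dotp (u + z) a) *
          ((Real.sqrt (Nat.card T) : ℂ)⁻¹ *
            (if (u + z) ∈ dualSub T then (Nat.card T : ℂ) else 0))) := by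
  set c : ℂ := (Real.sqrt (Nat.card T) : ℂ)⁻¹ with hc
  set F : Fvec n → ℂ := fun v => sgn (dotp u v) * (sgn (dotp z (v + x)) * cosetState T a (v + x))
    with hF
  have step1 : ∑ v : Fvec n, F v = ∑ v : Fvec n, F (v + (x + a)) :=
    (Equiv.sum_comp (Equiv.addRight (x + a)) F).symm
  have step2 : ∀ v : Fvec n, F (v + (x + a))
      = sgn (dotp u x) * (sgn (dotp (u + z) a) *
          (c * (if v ∈ T then sgn (dotp (u + z) v) else 0))) := by
    intro v
    have harg1 : v + (x + a) + x = v + a := by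
      rw [show v + (x + a) + x = v + a + (x + x) from by abel, fvec_add_self, add_zero]
    have hargs : v + a + a = v := by
      rw [add_assoc, fvec_add_self, add_zero]
    have hcos : cosetState T a (v + (x + a) + x) = (if v ∈ T then c else 0) := by
      show (if v + (x + a) + x + a ∈ T then c else 0) = _
      rw [show v + (x + a) + x + a = v from by rw [harg1, hargs]]
    simp only [hF]; rw [hcos, harg1]
    by_cases hv : v ∈ T
    · rw [if_pos hv, if_pos hv]
      rw [dotp_add_right u v (x + a), dotp_add_right u x a, dotp_add_right z v a,
        dotp_add_left u z v, dotp_add_left u z a]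
      simp only [sgn_add]
      ring
    · rw [if_neg hv, if_neg hv]; ring
  rw [step1, Finset.sum_congr rfl (fun v _ => step2 v)]
  rw [← Finset.mul_sum, ← Finset.mul_sum, ← Finset.mul_sum, keySum T (u + z)]
lemma const_eq_real {m nS nD : ℕ} (h : nD * (2 * nS) = 2 ^ m) (hS : 0 < nS) (hD : 0 < nD) :
    (Real.sqrt (2 ^ m))⁻¹ * ((Real.sqrt nS)⁻¹ * (nS : ℝ)) =
      (Real.sqrt 2)⁻¹ * (Real.sqrt nD)⁻¹ := by
  have h2 : ((2:ℝ) ^ m) = (nD : ℝ) * (2 * nS) := by exact_mod_cast congrArg (Nat.cast (R := ℝ)) h.symm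
  have hs2 : Real.sqrt ((2:ℝ) ^ m) = Real.sqrt nD * (Real.sqrt 2 * Real.sqrt nS) := by
    rw [h2, Real.sqrt_mul (by positivity), Real.sqrt_mul (by positivity)]
  have hnS : (0:ℝ) < Real.sqrt nS := Real.sqrt_pos.mpr (by exact_mod_cast hS)
  have hnD : (0:ℝ) < Real.sqrt nD := Real.sqrt_pos.mpr (by exact_mod_cast hD)
  have h2' : (0:ℝ) < Real.sqrt 2 := Real.sqrt_pos.mpr (by norm_num)
  have hnSq : Real.sqrt nS * Real.sqrt nS = (nS:ℝ) := Real.mul_self_sqrt (by positivity)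
  rw [hs2, ← hnSq]
  field_simp
  rw [Real.sqrt_sq hnS.le]
set_option maxHeartbeats 1000000 in
/-- Let `S ⊆ 𝔽₂^m` be a subspace, `Δ ∉ S`, `S_Δ := span(S, Δ)`, `Ŝ := (S_Δ)⊥`, and
`Δ̂ ∈ S⊥ ∖ Ŝ`.  Then for all `x, z ∈ 𝔽₂^m` and `α, β ∈ ℂ`:
`H^{⊗m} X^x Z^z (α|S⟩ + β|S+Δ⟩) = Z^x X^z (((α+β)/√2)|Ŝ⟩ + ((α−β)/√2)|Ŝ+Δ̂⟩)`. -/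
theorem hadamard_of_authenticated_qubit
    {m : ℕ} (hm : 1 ≤ m)
    (S : Submodule (ZMod 2) (Fvec m)) (Δ : Fvec m) (hΔ : Δ ∉ S)
    (Δhat : Fvec m) (hΔhat₁ : Δhat ∈ dualSub S) (hΔhat₂ : Δhat ∉ dualSub (extSpan S Δ))
    (x z : Fvec m) (α β : ℂ) :
    Had (PauliX x (PauliZ z (α • cosetState S 0 + β • cosetState S Δ)))
      = PauliZ x (PauliX z
          (((α + β) / (Real.sqrt 2 : ℂ)) • cosetState (dualSub (extSpan S Δ)) 0
            + ((α - β) / (Real.sqrt 2 : ℂ)) • cosetState (dualSub (extSpan S Δ)) Δhat)) := by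
  have hnS : 0 < Nat.card S := @Nat.card_pos _ ⟨⟨0, S.zero_mem⟩⟩ _
  have hnD : 0 < Nat.card (dualSub (extSpan S Δ)) :=
    @Nat.card_pos _ ⟨⟨0, (dualSub (extSpan S Δ)).zero_mem⟩⟩ _
  have hcards : Nat.card (dualSub (extSpan S Δ)) * (2 * Nat.card S) = 2 ^ m := by
    rw [← card_extSpan S Δ hΔ]; exact card_dual_mul (extSpan S Δ)
  have hconst : ((Real.sqrt (2 ^ m) : ℝ) : ℂ)⁻¹ * (((Real.sqrt (Nat.card S) : ℝ) : ℂ)⁻¹ *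
        ((Nat.card S : ℕ) : ℂ)) =
      ((Real.sqrt 2 : ℝ) : ℂ)⁻¹ * ((Real.sqrt (Nat.card (dualSub (extSpan S Δ))) : ℝ) : ℂ)⁻¹ := by
    have h := const_eq_real hcards hnS hnD
    simp only [← Complex.ofReal_natCast, ← Complex.ofReal_inv, ← Complex.ofReal_mul]
    exact_mod_cast congrArg (Complex.ofReal) h
  have hΔΔ : dotp Δhat Δ = 1 := by
    rcases zmod2_cases (dotp Δhat Δ) with h0 | h1
    · exact absurd (mem_dual_ext.mpr ⟨hΔhat₁, h0⟩) hΔhat₂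
    · exact h1
  ext u
  set y : Fvec m := u + z with hy
  -- LHS evaluation
  have hψ : ∀ v, (PauliX x (PauliZ z (α • cosetState S 0 + β • cosetState S Δ))) v
      = sgn (dotp z (v + x)) * (α * cosetState S 0 (v + x) + β * cosetState S Δ (v + x)) :=
    fun v => rfl
  have hLHS : Had (PauliX x (PauliZ z (α • cosetState S 0 + β • cosetState S Δ))) u
      = (Real.sqrt (2 ^ m) : ℂ)⁻¹ *
          (α * (sgn (dotp u x) * (sgn (dotp y 0) * ((Real.sqrt (Nat.card S) : ℂ)⁻¹ *
             (if y ∈ dualSub S then (Nat.card S : ℂ) else 0))))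
           + β * (sgn (dotp u x) * (sgn (dotp y Δ) * ((Real.sqrt (Nat.card S) : ℂ)⁻¹ *
             (if y ∈ dualSub S then (Nat.card S : ℂ) else 0))))) := by
    show (Real.sqrt (2 ^ m) : ℂ)⁻¹ * ∑ v, sgn (dotp u v) *
        (PauliX x (PauliZ z (α • cosetState S 0 + β • cosetState S Δ))) v = _
    rw [Finset.sum_congr rfl (fun v _ => by rw [hψ v])]
    have hsplit : ∑ v : Fvec m, sgn (dotp u v) * (sgn (dotp z (v + x)) *
          (α * cosetState S 0 (v + x) + β * cosetState S Δ (v + x)))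
        = α * ∑ v : Fvec m, sgn (dotp u v) * (sgn (dotp z (v + x)) * cosetState S 0 (v + x))
          + β * ∑ v : Fvec m, sgn (dotp u v) * (sgn (dotp z (v + x)) * cosetState S Δ (v + x)) := by
      rw [Finset.mul_sum, Finset.mul_sum, ← Finset.sum_add_distrib]
      exact Finset.sum_congr rfl fun v _ => by ring
    rw [show ∑ v : Fvec m, sgn (dotp u v) * (sgn (dotp z (v + x)) *
          (α * cosetState S 0 (v + x) + β * cosetState S Δ (v + x))) =
        α * ∑ v : Fvec m, sgn (dotp u v) * (sgn (dotp z (v + x)) * cosetState S 0 (v + x))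
          + β * ∑ v : Fvec m, sgn (dotp u v) * (sgn (dotp z (v + x)) * cosetState S Δ (v + x))
      from hsplit, main_sum S 0 x z u, main_sum S Δ x z u]
  -- RHS evaluation
  have hRHS : (PauliZ x (PauliX z
          (((α + β) / (Real.sqrt 2 : ℂ)) • cosetState (dualSub (extSpan S Δ)) 0
            + ((α - β) / (Real.sqrt 2 : ℂ)) • cosetState (dualSub (extSpan S Δ)) Δhat))) u
      = sgn (dotp x u) * ((α + β) / (Real.sqrt 2 : ℂ) *
            (if y + 0 ∈ dualSub (extSpan S Δ)
              then ((Real.sqrt (Nat.card (dualSub (extSpan S Δ))) : ℝ) : ℂ)⁻¹ else 0)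
          + (α - β) / (Real.sqrt 2 : ℂ) *
            (if y + Δhat ∈ dualSub (extSpan S Δ)
              then ((Real.sqrt (Nat.card (dualSub (extSpan S Δ))) : ℝ) : ℂ)⁻¹ else 0)) := rfl
  rw [hLHS, hRHS]
  rw [dotp_zero_right, sgn_zero, add_zero, dotp_comm x u]
  by_cases hyS : y ∈ dualSub S
  · rcases zmod2_cases (dotp y Δ) with hd | hd
    · have h1 : y ∈ dualSub (extSpan S Δ) := mem_dual_ext.mpr ⟨hyS, hd⟩
      have h2 : y + Δhat ∉ dualSub (extSpan S Δ) := by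
        intro hmem
        have := (mem_dual_ext.mp hmem).2
        rw [dotp_add_left, hd, hΔΔ] at this
        exact absurd this (by decide)
      rw [if_pos hyS, if_pos h1, if_neg h2, hd, sgn_zero]
      rw [mul_zero, add_zero]
      linear_combination (α + β) * sgn (dotp u x) * hconst
    · have h1 : y ∉ dualSub (extSpan S Δ) := by
        intro hmem
        have := (mem_dual_ext.mp hmem).2
        rw [hd] at this
        exact absurd this (by decide)
      have h2 : y + Δhat ∈ dualSub (extSpan S Δ) := by
        refine mem_dual_ext.mpr ⟨(dualSub S).add_mem hyS hΔhat₁, ?_⟩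
        rw [dotp_add_left, hd, hΔΔ]; rfl
      rw [if_pos hyS, if_neg h1, if_pos h2, hd]
      rw [show sgn 1 = -1 from by simp [sgn, show (1:ZMod 2) ≠ 0 from by decide]]
      rw [mul_zero, zero_add]
      linear_combination (α - β) * sgn (dotp u x) * hconst
  · have h1 : y ∉ dualSub (extSpan S Δ) := fun hmem => hyS (mem_dual_ext.mp hmem).1
    have h2 : y + Δhat ∉ dualSub (extSpan S Δ) := by
      intro hmem
      apply hyS
      have h3 : y + Δhat ∈ dualSub S := (mem_dual_ext.mp hmem).1
      have := (dualSub S).add_mem h3 hΔhat₁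
      rwa [add_assoc, fvec_add_self, add_zero] at this
    rw [if_neg hyS, if_neg h1, if_neg h2]
    ring
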